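/- Let C be a well-powered category with wide pullbacks and let F : C ⥤ C preserve monomorphisms and intersections. Then any two reachable pointed subcoalgebras of an I-pointed F-coalgebra (C, c, i_C) coincide: if m₁ : (S₁, s₁, i₁) ↪ (C, c, i_C) and m₂ : (S₂, s₂, i₂) ↪ (C, c, i_C) are monomorphic homomorphisms of I-pointed coalgebras with both (S₁, s₁, i₁) and (S₂, s₂, i₂) reachable, then m₁ and m₂ represent the same subobject of C (there is an isomorphism j : S₁ ≅ S₂ with j.hom ≫ m₂ = m₁). -/

import Mathlib

open CategoryTheory CategoryTheory.Limits

universe w v u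

variable {C : Type u} [Category.{v} C]

/-- A functor preserves monomorphisms. -/
def PreservesMonos (F : C ⥤ C) : Prop :=
  ∀ ⦃X Y : C⦄ (f : X ⟶ Y), Mono f → Mono (F.map f)

/-- The induced map on subobject lattices of a mono-preserving functor. -/
noncomputable def subMap {F : C ⥤ C} (hF : PreservesMonos F) {Y : C} (m : Subobject Y) :
    Subobject (F.obj Y) :=
  letI : Mono (F.map m.arrow) := hF m.arrow inferInstance
  Subobject.mk (F.map m.arrow)

/-- A mono-preserving functor preserves intersections if the induced maps on subobject
lattices preserve arbitrary infima. -/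
def PreservesIntersections [WellPowered.{v} C] [HasWidePullbacks.{v} C] {F : C ⥤ C}
    (hF : PreservesMonos F) : Prop :=
  ∀ ⦃Y : C⦄ (s : Set (Subobject Y)), subMap hF (sInf s) = sInf (subMap hF '' s)

/-- The "next time" operator of a morphism `f : X ⟶ F.obj Y`. -/
noncomputable def nextTime [HasPullbacks C] {F : C ⥤ C} (hF : PreservesMonos F)
    {X Y : C} (f : X ⟶ F.obj Y) (n : Subobject Y) : Subobject X :=
  (Subobject.pullback f).obj (subMap hF n)

/-- The "previous time" operator of a morphism `f : X ⟶ F.obj Y`: it sends a subobject `m` of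
`X` to the least subobject `n` of `Y` such that `m.arrow ≫ f` factors through `F.map n.arrow`. -/
noncomputable def prevTime [WellPowered.{v} C] [HasWidePullbacks.{v} C] (F : C ⥤ C)
    {X Y : C} (f : X ⟶ F.obj Y) (m : Subobject X) : Subobject Y :=
  sInf {n : Subobject Y | ∃ g : (m : C) ⟶ F.obj (n : C), g ≫ F.map n.arrow = m.arrow ≫ f}

/-- An `I`-pointed coalgebra `(X, c, i)` is reachable if every monomorphic homomorphism of
`I`-pointed coalgebras into it is an isomorphism. -/
def Reachable (F : C ⥤ C) {I X : C} (c : X ⟶ F.obj X) (i : I ⟶ X) : Prop :=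
  ∀ ⦃S : C⦄ (s : S ⟶ F.obj S) (iS : I ⟶ S) (m : S ⟶ X),
    Mono m → s ≫ F.map m = m ≫ c → iS ≫ m = i → IsIso m
/-- **Uniqueness of the reachable part:** any two reachable pointed subcoalgebras of an
`I`-pointed `F`-coalgebra `(X, c, i_C)` represent the same subobject of `X`. -/
theorem reachable_subcoalgebra_unique
    [WellPowered.{v} C] [HasWidePullbacks.{v} C]
    (F : C ⥤ C) (hF : PreservesMonos F) (hInt : PreservesIntersections hF)
    {I X S₁ S₂ : C} (c : X ⟶ F.obj X) (i_C : I ⟶ X)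
    (s₁ : S₁ ⟶ F.obj S₁) (i₁ : I ⟶ S₁) (m₁ : S₁ ⟶ X) (hm₁ : Mono m₁)
    (hm₁_coalg : s₁ ≫ F.map m₁ = m₁ ≫ c) (hm₁_pt : i₁ ≫ m₁ = i_C)
    (h₁_reach : Reachable F s₁ i₁)
    (s₂ : S₂ ⟶ F.obj S₂) (i₂ : I ⟶ S₂) (m₂ : S₂ ⟶ X) (hm₂ : Mono m₂)
    (hm₂_coalg : s₂ ≫ F.map m₂ = m₂ ≫ c) (hm₂_pt : i₂ ≫ m₂ = i_C)
    (h₂_reach : Reachable F s₂ i₂) :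
    ∃ j : S₁ ≅ S₂, j.hom ≫ m₂ = m₁ := by
  haveI := hm₁; haveI := hm₂
  set P : Subobject X := Subobject.mk m₁ ⊓ Subobject.mk m₂ with hPdef
  -- inclusion maps into S₁ and S₂
  let q₁ : (P : C) ⟶ S₁ :=
    Subobject.ofLE P (Subobject.mk m₁) inf_le_left ≫ (Subobject.underlyingIso m₁).hom
  let q₂ : (P : C) ⟶ S₂ :=
    Subobject.ofLE P (Subobject.mk m₂) inf_le_right ≫ (Subobject.underlyingIso m₂).hom
  have hq₁ : q₁ ≫ m₁ = P.arrow := by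
    simp [q₁]
  have hq₂ : q₂ ≫ m₂ = P.arrow := by
    simp [q₂]
  haveI : Mono q₁ := by
    have : Mono (q₁ ≫ m₁) := by rw [hq₁]; infer_instance
    exact mono_of_mono q₁ m₁
  haveI : Mono q₂ := by
    have : Mono (q₂ ≫ m₂) := by rw [hq₂]; infer_instance
    exact mono_of_mono q₂ m₂
  -- subMap of the intersection is the intersection of the subMaps
  have hpair : ∀ (Y : C) (a b : Subobject Y), sInf {a, b} = a ⊓ b := by
    intro Y a b
    refine le_antisymm (le_inf (Subobject.sInf_le.{v} _ _ (by simp)) (Subobject.sInf_le.{v} _ _ (by simp))) (Subobject.le_sInf.{v} _ _ ?_)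
    rintro c hc
    rcases hc with rfl | rfl
    · exact inf_le_left
    · exact inf_le_right
  have hsub : subMap hF P =
      subMap hF (Subobject.mk m₁) ⊓ subMap hF (Subobject.mk m₂) := by
    have h := hInt {Subobject.mk m₁, Subobject.mk m₂}
    rw [Set.image_pair, hpair, hpair] at h
    exact h
  -- mono instances
  haveI : Mono (F.map m₁) := hF m₁ inferInstance
  haveI : Mono (F.map m₂) := hF m₂ inferInstance
  haveI : Mono (F.map (Subobject.mk m₁).arrow) := hF _ inferInstance
  haveI : Mono (F.map (Subobject.mk m₂).arrow) := hF _ inferInstance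
  haveI : Mono (F.map P.arrow) := hF _ inferInstance
  -- the coalgebra structure on P
  have key₁ : q₁ ≫ s₁ ≫ F.map m₁ = P.arrow ≫ c := by
    rw [hm₁_coalg, ← Category.assoc, hq₁]
  have key₂ : q₂ ≫ s₂ ≫ F.map m₂ = P.arrow ≫ c := by
    rw [hm₂_coalg, ← Category.assoc, hq₂]
  have hfac₁ : (subMap hF (Subobject.mk m₁)).Factors (P.arrow ≫ c) := by
    rw [show subMap hF (Subobject.mk m₁) = Subobject.mk (F.map (Subobject.mk m₁).arrow) from rfl,
      Subobject.mk_factors_iff]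
    refine ⟨q₁ ≫ s₁ ≫ F.map (Subobject.underlyingIso m₁).inv, ?_⟩
    simp only [CategoryTheory.MonoOver.mk_arrow, Category.assoc, ← Functor.map_comp, Subobject.underlyingIso_arrow]
    show (q₁ ≫ s₁ ≫ F.map (Subobject.underlyingIso m₁).inv) ≫ F.map (Subobject.mk m₁).arrow = P.arrow ≫ c
    simp only [Category.assoc, ← Functor.map_comp, Subobject.underlyingIso_arrow]
    exact key₁
  have hfac₂ : (subMap hF (Subobject.mk m₂)).Factors (P.arrow ≫ c) := by
    rw [show subMap hF (Subobject.mk m₂) = Subobject.mk (F.map (Subobject.mk m₂).arrow) from rfl,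
      Subobject.mk_factors_iff]
    refine ⟨q₂ ≫ s₂ ≫ F.map (Subobject.underlyingIso m₂).inv, ?_⟩
    simp only [CategoryTheory.MonoOver.mk_arrow, Category.assoc, ← Functor.map_comp, Subobject.underlyingIso_arrow]
    show (q₂ ≫ s₂ ≫ F.map (Subobject.underlyingIso m₂).inv) ≫ F.map (Subobject.mk m₂).arrow = P.arrow ≫ c
    simp only [Category.assoc, ← Functor.map_comp, Subobject.underlyingIso_arrow]
    exact key₂
  have hfacP : (subMap hF P).Factors (P.arrow ≫ c) := by
    rw [hsub]
    exact (Subobject.inf_factors _).2 ⟨hfac₁, hfac₂⟩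
  obtain ⟨t, ht⟩ : ∃ t : (P : C) ⟶ F.obj (P : C), t ≫ F.map P.arrow = P.arrow ≫ c := by
    refine ⟨Subobject.factorThru _ _ hfacP ≫ (Subobject.underlyingIso (F.map P.arrow)).hom, ?_⟩
    erw [Category.assoc, Subobject.underlyingIso_hom_comp_eq_mk]
    exact Subobject.factorThru_arrow _ _ hfacP
  have ht₁ : t ≫ F.map q₁ = q₁ ≫ s₁ := by
    rw [← cancel_mono (F.map m₁), Category.assoc, Category.assoc, ← F.map_comp, hq₁,
      ht, key₁]
  have ht₂ : t ≫ F.map q₂ = q₂ ≫ s₂ := by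
    rw [← cancel_mono (F.map m₂), Category.assoc, Category.assoc, ← F.map_comp, hq₂,
      ht, key₂]
  -- the point of P
  have hptP : P.Factors i_C := by
    refine (Subobject.inf_factors _).2 ⟨?_, ?_⟩
    · rw [Subobject.mk_factors_iff]; exact ⟨i₁, hm₁_pt⟩
    · rw [Subobject.mk_factors_iff]; exact ⟨i₂, hm₂_pt⟩
  obtain ⟨iP, hiP⟩ : ∃ iP : I ⟶ (P : C), iP ≫ P.arrow = i_C :=
    ⟨Subobject.factorThru _ _ hptP, Subobject.factorThru_arrow _ _ hptP⟩
  have hiP₁ : iP ≫ q₁ = i₁ := by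
    rw [← cancel_mono m₁, Category.assoc, hq₁, hiP, hm₁_pt]
  have hiP₂ : iP ≫ q₂ = i₂ := by
    rw [← cancel_mono m₂, Category.assoc, hq₂, hiP, hm₂_pt]
  -- reachability gives isomorphisms
  haveI : IsIso q₁ := h₁_reach t iP q₁ inferInstance ht₁ hiP₁
  haveI : IsIso q₂ := h₂_reach t iP q₂ inferInstance ht₂ hiP₂
  refine ⟨(asIso q₁).symm ≪≫ asIso q₂, ?_⟩
  simp only [Iso.trans_hom, Iso.symm_hom, asIso_inv, asIso_hom, Category.assoc, hq₂]
  rw [← hq₁, IsIso.inv_comp_eq]
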